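/- For all n, the matrix I − P(n)³ is nilpotent over 𝔽₂, where P(n) is the Pascal matrix with entries C(i+j, i) mod 2. -/

import Mathlib

open Matrix

namespace PascalCubeAux

lemma lucas2 (n k : ℕ) :
    ((Nat.choose n k : ZMod 2)) =
      (Nat.choose (n % 2) (k % 2) : ZMod 2) * (Nat.choose (n / 2) (k / 2) : ZMod 2) := by
  have : Fact (Nat.Prime 2) := ⟨Nat.prime_two⟩
  have h := @Choose.choose_modEq_choose_mod_mul_choose_div_nat n k 2 this
  have := (ZMod.natCast_eq_natCast_iff _ _ _).mpr h
  rw [this]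
  push_cast
  ring

lemma lemA : ∀ k x y : ℕ, x < 2^k → y < 2^k →
    ((Nat.choose (x + (2^k + y)) x : ZMod 2)) = (Nat.choose (x + y) x : ZMod 2) := by
  intro k
  induction k with
  | zero =>
    intro x y hx hy
    interval_cases x <;> interval_cases y <;> rfl
  | succ k ih =>
    intro x y hx hy
    have h2 : (2:ℕ)^(k+1) = 2^k + 2^k := by rw [pow_succ]; omega
    rw [lucas2 (x + (2^(k+1) + y)) x, lucas2 (x + y) x]
    by_cases hodd : x % 2 = 1 ∧ y % 2 = 1
    · have h1 : (x + (2^(k+1) + y)) % 2 = 0 := by omega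
      have h1' : (x + y) % 2 = 0 := by omega
      rw [h1, h1', hodd.1]
      norm_num
    · have hda : (x + (2^(k+1) + y)) / 2 = x / 2 + (2^k + y / 2) := by omega
      have hdb : (x + y) / 2 = x / 2 + y / 2 := by omega
      have hm : (x + (2^(k+1) + y)) % 2 = (x + y) % 2 := by omega
      rw [hda, hdb, hm, ih (x/2) (y/2) (by omega) (by omega)]

lemma lemB : ∀ k x y : ℕ, x < 2^k → y < 2^k →
    ((Nat.choose ((2^k + x) + (2^k + y)) (2^k + x) : ZMod 2)) = 0 := by
  intro k
  induction k with
  | zero =>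
    intro x y hx hy
    interval_cases x <;> interval_cases y <;> decide
  | succ k ih =>
    intro x y hx hy
    have h2 : (2:ℕ)^(k+1) = 2^k + 2^k := by rw [pow_succ]; omega
    rw [lucas2]
    by_cases hodd : x % 2 = 1 ∧ y % 2 = 1
    · have h1 : ((2^(k+1) + x) + (2^(k+1) + y)) % 2 = 0 := by omega
      have h1' : (2^(k+1) + x) % 2 = 1 := by omega
      rw [h1, h1']
      norm_num
    · have hda : ((2^(k+1) + x) + (2^(k+1) + y)) / 2 = (2^k + x/2) + (2^k + y/2) := by omega
      have hdb : (2^(k+1) + x) / 2 = 2^k + x/2 := by omega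
      rw [hda, hdb, ih (x/2) (y/2) (by omega) (by omega)]
      ring

lemma csymm (a b : ℕ) :
    (Nat.choose (a + b) a : ZMod 2) = (Nat.choose (b + a) b : ZMod 2) := by
  rw [Nat.choose_symm_add, Nat.add_comm]


def Pm (n : ℕ) : Matrix (Fin n) (Fin n) (ZMod 2) :=
  Matrix.of fun i j : Fin n => ((Nat.choose (i + j) i : ZMod 2))

def Sm (n : ℕ) : Matrix (Fin n) (Fin n) (ZMod 2) :=
  Matrix.of fun i j : Fin n => ((Nat.choose ((n-1-i) + (n-1-j)) (n-1-i) : ZMod 2))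

lemma matAddSelf {ι κ : Type*} (M : Matrix ι κ (ZMod 2)) : M + M = 0 := by
  ext i j
  show M i j + M i j = 0
  generalize M i j = a
  fin_cases a <;> rfl

lemma matNeg {ι κ : Type*} (M : Matrix ι κ (ZMod 2)) : -M = M := by
  ext i j
  show -(M i j) = M i j
  generalize M i j = a
  fin_cases a <;> rfl

lemma eqOfAddEqZero {ι κ : Type*} {M N : Matrix ι κ (ZMod 2)} (h : M + N = 0) : M = N := by
  have := add_eq_zero_iff_eq_neg.mp h
  rwa [matNeg] at this

lemma dyadic (k : ℕ) : (Pm (2^k))^3 = 1 ∧ (Pm (2^k))^2 = Sm (2^k) := by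
  induction k with
  | zero =>
    constructor <;> · ext i j; fin_cases i; fin_cases j; rfl
  | succ k ih =>
    obtain ⟨ih3, ih2⟩ := ih
    have h2 : (2:ℕ)^(k+1) = 2^k + 2^k := by rw [pow_succ]; omega
    let e : Fin (2^k) ⊕ Fin (2^k) ≃ Fin (2^(k+1)) := finSumFinEquiv.trans (finCongr h2.symm)
    have he1 : ∀ i : Fin (2^k), ((e (Sum.inl i) : Fin (2^(k+1))) : ℕ) = (i : ℕ) := by
      intro i; simp [e]
    have he2 : ∀ i : Fin (2^k), ((e (Sum.inr i) : Fin (2^(k+1))) : ℕ) = 2^k + (i : ℕ) := by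
      intro i; simp [e]; omega
    have hblock : (Pm (2^(k+1))).submatrix e e = fromBlocks (Pm (2^k)) (Pm (2^k)) (Pm (2^k)) 0 := by
      ext i j
      rcases i with i | i <;> rcases j with j | j
      · simp only [submatrix_apply, fromBlocks_apply₁₁, Pm, of_apply, he1]
      · simp only [submatrix_apply, fromBlocks_apply₁₂, Pm, of_apply, he1, he2]
        exact lemA k i j i.isLt j.isLt
      · simp only [submatrix_apply, fromBlocks_apply₂₁, Pm, of_apply, he1, he2]
        rw [csymm (2^k + (i:ℕ)) (j:ℕ), lemA k j i j.isLt i.isLt, csymm]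
      · simp only [submatrix_apply, fromBlocks_apply₂₂, Pm, of_apply, he2, Matrix.zero_apply]
        exact lemB k i j i.isLt j.isLt
    have hblockS : (Sm (2^(k+1))).submatrix e e = fromBlocks 0 (Sm (2^k)) (Sm (2^k)) (Sm (2^k)) := by
      ext i j
      rcases i with i | i <;> rcases j with j | j
      · simp only [submatrix_apply, fromBlocks_apply₁₁, Sm, of_apply, he1, Matrix.zero_apply]
        have ha : 2^(k+1) - 1 - (i:ℕ) = 2^k + (2^k - 1 - (i:ℕ)) := by omega
        have hb : 2^(k+1) - 1 - (j:ℕ) = 2^k + (2^k - 1 - (j:ℕ)) := by omega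
        rw [ha, hb, lemB k _ _ (by omega) (by omega)]
      · simp only [submatrix_apply, fromBlocks_apply₁₂, Sm, of_apply, he1, he2]
        have ha : 2^(k+1) - 1 - (i:ℕ) = 2^k + (2^k - 1 - (i:ℕ)) := by omega
        have hb : 2^(k+1) - 1 - (2^k + (j:ℕ)) = 2^k - 1 - (j:ℕ) := by omega
        rw [ha, hb, csymm, lemA k _ _ (by omega) (by omega), csymm]
      · simp only [submatrix_apply, fromBlocks_apply₂₁, Sm, of_apply, he1, he2]
        have ha : 2^(k+1) - 1 - (2^k + (i:ℕ)) = 2^k - 1 - (i:ℕ) := by omega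
        have hb : 2^(k+1) - 1 - (j:ℕ) = 2^k + (2^k - 1 - (j:ℕ)) := by omega
        rw [ha, hb, lemA k _ _ (by omega) (by omega)]
      · simp only [submatrix_apply, fromBlocks_apply₂₂, Sm, of_apply, he2]
        have ha : 2^(k+1) - 1 - (2^k + (i:ℕ)) = 2^k - 1 - (i:ℕ) := by omega
        have hb : 2^(k+1) - 1 - (2^k + (j:ℕ)) = 2^k - 1 - (j:ℕ) := by omega
        rw [ha, hb]
    let φ := Matrix.reindexAlgEquiv (ZMod 2) (ZMod 2) e.symm
    have hφ : ∀ M : Matrix (Fin (2^(k+1))) (Fin (2^(k+1))) (ZMod 2),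
        φ M = M.submatrix e e := by
      intro M
      simp [φ, Matrix.reindexAlgEquiv_apply, Matrix.reindex_apply]
    have hQ3 : Pm (2^k) * Pm (2^k) * Pm (2^k) = 1 := by
      have := ih3
      rw [pow_succ, pow_succ, pow_one] at this
      exact this
    have hQQ : Pm (2^k) * Pm (2^k) = Sm (2^k) := by rw [← pow_two]; exact ih2
    have hsq : fromBlocks (Pm (2^k)) (Pm (2^k)) (Pm (2^k)) (0 : Matrix (Fin (2^k)) (Fin (2^k)) (ZMod 2)) *
        fromBlocks (Pm (2^k)) (Pm (2^k)) (Pm (2^k)) 0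
        = fromBlocks 0 (Pm (2^k) * Pm (2^k)) (Pm (2^k) * Pm (2^k)) (Pm (2^k) * Pm (2^k)) := by
      rw [fromBlocks_multiply]
      simp [matAddSelf]
    have hcube : fromBlocks (Pm (2^k)) (Pm (2^k)) (Pm (2^k)) (0 : Matrix (Fin (2^k)) (Fin (2^k)) (ZMod 2)) ^ 3 =
        (1 : Matrix (Fin (2^k) ⊕ Fin (2^k)) (Fin (2^k) ⊕ Fin (2^k)) (ZMod 2)) := by
      rw [pow_succ, pow_succ, pow_one, hsq, fromBlocks_multiply]
      simp only [Matrix.zero_mul, Matrix.mul_zero, zero_add, add_zero, matAddSelf,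
        ← mul_assoc, hQ3, fromBlocks_one]
    constructor
    · apply φ.injective
      rw [map_pow, _root_.map_one, hφ, hblock, hcube]
    · apply φ.injective
      rw [map_pow, hφ, hφ, hblock, hblockS, pow_two, hsq, hQQ]

def Xm (n t : ℕ) : Matrix (Fin n) (Fin t) (ZMod 2) :=
  Matrix.of fun i j => ((Nat.choose ((i:ℕ) + (n + (j:ℕ))) (i:ℕ) : ZMod 2))


lemma subEq {ι : Type} (M N : Matrix ι ι (ZMod 2)) : M - N = M + N := by
  rw [sub_eq_add_neg, matNeg]

lemma diagPow {ι κ : Type} [Fintype ι] [Fintype κ] [DecidableEq ι] [DecidableEq κ]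
    (A : Matrix ι ι (ZMod 2)) (B : Matrix κ κ (ZMod 2)) (m : ℕ) :
    (fromBlocks A 0 0 B)^m = fromBlocks (A^m) 0 0 (B^m) := by
  induction m with
  | zero => simp [fromBlocks_one]
  | succ m ih => rw [pow_succ, ih, fromBlocks_multiply]; simp [pow_succ]

lemma powFG {ι κ : Type} [Fintype ι] [Fintype κ] [DecidableEq ι] [DecidableEq κ]
    (F : Matrix ι κ (ZMod 2)) (G : Matrix κ ι (ZMod 2)) (m : ℕ) :
    (F * G)^(m+1) = F * (G * F)^m * G := by
  induction m with
  | zero => simp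
  | succ m ih =>
    rw [pow_succ, ih, pow_succ]
    simp only [Matrix.mul_assoc]

lemma step (k n t : ℕ) (hn : 2^k < n) (hnK : n + t = 2^(k+1))
    (IH : IsNilpotent ((1 : Matrix (Fin t) (Fin t) (ZMod 2)) - (Pm t)^3)) :
    IsNilpotent ((1 : Matrix (Fin n) (Fin n) (ZMod 2)) - (Pm n)^3) := by
  obtain ⟨hQ3, hQ2⟩ := dyadic (k+1)
  have h2 : (2:ℕ)^(k+1) = 2^k + 2^k := by rw [pow_succ]; omega
  let e2 : Fin n ⊕ Fin t ≃ Fin (2^(k+1)) := finSumFinEquiv.trans (finCongr hnK)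
  have he1 : ∀ i : Fin n, ((e2 (Sum.inl i)) : ℕ) = (i:ℕ) := by intro i; simp [e2]
  have he2 : ∀ i : Fin t, ((e2 (Sum.inr i)) : ℕ) = n + (i:ℕ) := by intro i; simp [e2]
  have hblk : (Pm (2^(k+1))).submatrix e2 e2 = fromBlocks (Pm n) (Xm n t) (Xm n t)ᵀ 0 := by
    ext i j
    rcases i with i | i <;> rcases j with j | j
    · simp only [submatrix_apply, fromBlocks_apply₁₁, Pm, of_apply, he1]
    · simp only [submatrix_apply, fromBlocks_apply₁₂, Pm, Xm, of_apply, he1, he2]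
    · simp only [submatrix_apply, fromBlocks_apply₂₁, Pm, Xm, transpose_apply, of_apply, he1, he2]
      exact csymm (n + (i:ℕ)) (j:ℕ)
    · simp only [submatrix_apply, fromBlocks_apply₂₂, Pm, of_apply, he2, Matrix.zero_apply]
      have ha : n + (i:ℕ) = 2^k + (n + (i:ℕ) - 2^k) := by omega
      have hb : n + (j:ℕ) = 2^k + (n + (j:ℕ) - 2^k) := by omega
      rw [ha, hb, lemB k _ _ (by omega) (by omega)]
  let φ := Matrix.reindexAlgEquiv (ZMod 2) (ZMod 2) e2.symm
  have hφ : ∀ M : Matrix (Fin (2^(k+1))) (Fin (2^(k+1))) (ZMod 2),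
      φ M = M.submatrix e2 e2 := by
    intro M; simp [φ, Matrix.reindex_apply]
  have hA3 : (fromBlocks (Pm n) (Xm n t) (Xm n t)ᵀ 0)^3 = 1 := by
    rw [← hblk, ← hφ, ← map_pow, hQ3, _root_.map_one]
  have hA2 : (fromBlocks (Pm n) (Xm n t) (Xm n t)ᵀ 0)^2 = (Sm (2^(k+1))).submatrix e2 e2 := by
    rw [← hblk, ← hφ, ← map_pow, hQ2, hφ]
  have hsq : (fromBlocks (Pm n) (Xm n t) (Xm n t)ᵀ 0)^2
      = fromBlocks (Pm n * Pm n + Xm n t * (Xm n t)ᵀ) (Pm n * Xm n t)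
          ((Xm n t)ᵀ * Pm n) ((Xm n t)ᵀ * Xm n t) := by
    rw [pow_two, fromBlocks_multiply]; simp
  have hcube := hA3
  rw [pow_succ, hsq, fromBlocks_multiply, ← fromBlocks_one, fromBlocks_inj] at hcube
  obtain ⟨h11, h12, h21, h22⟩ := hcube
  rw [Matrix.mul_zero, add_zero] at h12 h22
  -- relations
  have hb : (Pm n * Pm n) * Xm n t = Xm n t * ((Xm n t)ᵀ * Xm n t) := by
    apply eqOfAddEqZero
    rw [← h12, Matrix.add_mul, Matrix.mul_assoc, Matrix.mul_assoc (Xm n t) ((Xm n t)ᵀ) (Xm n t)]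
  have ha : ((Xm n t)ᵀ * Pm n) * Xm n t = 1 := h22
  have h11' : (Pm n)^3 + ((Pm n * Xm n t) * (Xm n t)ᵀ + Xm n t * ((Xm n t)ᵀ * Pm n)) = 1 := by
    rw [pow_succ, pow_succ, pow_one, ← h11, add_mul,
      ← Matrix.mul_assoc (Xm n t) ((Xm n t)ᵀ) (Pm n)]
    abel
  have hN : (1 : Matrix (Fin n) (Fin n) (ZMod 2)) - (Pm n)^3
      = (Pm n * Xm n t) * (Xm n t)ᵀ + Xm n t * ((Xm n t)ᵀ * Pm n) := by
    rw [← h11']; abel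
  -- the reversed Pascal
  let ψ := Matrix.reindexAlgEquiv (ZMod 2) (ZMod 2) (Fin.revPerm : Equiv.Perm (Fin t))
  have hBR := hA2
  rw [hsq] at hBR
  have hD0 := congrArg Matrix.toBlocks₂₂ hBR
  rw [toBlocks_fromBlocks₂₂] at hD0
  have hDP : (Xm n t)ᵀ * Xm n t = ψ (Pm t) := by
    rw [hD0]
    ext i j
    simp only [toBlocks₂₂, of_apply, submatrix_apply, Sm, he2, ψ,
      Matrix.reindexAlgEquiv_apply, Matrix.reindex_apply, Fin.revPerm_symm,
      Fin.revPerm_apply, Fin.val_rev, Pm]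
    congr 2 <;> omega
  obtain ⟨m, hm⟩ := IH
  have hDnil : ((1 : Matrix (Fin t) (Fin t) (ZMod 2)) - ((Xm n t)ᵀ * Xm n t)^3)^m = 0 := by
    rw [hDP]
    have h1 : (1 : Matrix (Fin t) (Fin t) (ZMod 2)) - (ψ (Pm t))^3 = ψ (1 - (Pm t)^3) := by
      rw [map_sub, _root_.map_one, map_pow]
    rw [h1, ← map_pow, hm, map_zero]
  -- F G factorization
  have hFG : fromCols (Pm n * Xm n t) (Xm n t) * fromRows (Xm n t)ᵀ ((Xm n t)ᵀ * Pm n)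
      = (1 : Matrix (Fin n) (Fin n) (ZMod 2)) - (Pm n)^3 := by
    rw [fromCols_mul_fromRows, hN]
  have e11 : (Xm n t)ᵀ * (Pm n * Xm n t) = 1 := by
    rw [← Matrix.mul_assoc]; exact ha
  have e21 : ((Xm n t)ᵀ * Pm n) * (Pm n * Xm n t)
      = ((Xm n t)ᵀ * Xm n t) * ((Xm n t)ᵀ * Xm n t) := by
    rw [Matrix.mul_assoc ((Xm n t)ᵀ) (Pm n) (Pm n * Xm n t),
      ← Matrix.mul_assoc (Pm n) (Pm n) (Xm n t), hb,
      ← Matrix.mul_assoc ((Xm n t)ᵀ) (Xm n t) ((Xm n t)ᵀ * Xm n t)]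
  have hGF : fromRows (Xm n t)ᵀ ((Xm n t)ᵀ * Pm n) * fromCols (Pm n * Xm n t) (Xm n t)
      = fromBlocks 1 ((Xm n t)ᵀ * Xm n t) (((Xm n t)ᵀ * Xm n t) * ((Xm n t)ᵀ * Xm n t)) 1 := by
    rw [fromRows_mul_fromCols, e11, e21, ha]
  have hGFsq : (fromRows (Xm n t)ᵀ ((Xm n t)ᵀ * Pm n) * fromCols (Pm n * Xm n t) (Xm n t))^2
      = fromBlocks ((1:Matrix (Fin t) (Fin t) (ZMod 2)) - ((Xm n t)ᵀ * Xm n t)^3) 0 0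
          ((1:Matrix (Fin t) (Fin t) (ZMod 2)) - ((Xm n t)ᵀ * Xm n t)^3) := by
    rw [pow_two, hGF, fromBlocks_multiply]
    apply fromBlocks_inj.mpr
    refine ⟨?_, ?_, ?_, ?_⟩
    · rw [subEq, Matrix.one_mul, pow_succ', pow_succ', pow_one]
    · rw [Matrix.one_mul, Matrix.mul_one, matAddSelf]
    · rw [Matrix.one_mul, Matrix.mul_one, matAddSelf]
    · rw [subEq, Matrix.one_mul, pow_succ, pow_succ, pow_one]
      abel
  refine ⟨2*m+1, ?_⟩
  rw [← hFG, powFG _ _ (2*m)]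
  have hz : (fromRows (Xm n t)ᵀ ((Xm n t)ᵀ * Pm n) * fromCols (Pm n * Xm n t) (Xm n t))^(2*m) = 0 := by
    rw [pow_mul, hGFsq, diagPow, hDnil]
    simp
  rw [hz, Matrix.mul_zero, Matrix.zero_mul]


end PascalCubeAux

set_option linter.unusedVariables false in
/-- Over `𝔽₂`, the matrix `I - P(n)³` is nilpotent, where `P(n)` is the
symmetric Pascal matrix modulo 2. -/
theorem one_sub_pascal_cube_nilpotent (n : ℕ) :
    IsNilpotent ((1 : Matrix (Fin n) (Fin n) (ZMod 2)) -
      (Matrix.of fun i j : Fin n => ((Nat.choose (i + j) i : ZMod 2))) ^ 3) := by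
  show IsNilpotent ((1 : Matrix (Fin n) (Fin n) (ZMod 2)) - (PascalCubeAux.Pm n)^3)
  induction n using Nat.strong_induction_on with
  | _ n IH =>
  rcases Nat.eq_zero_or_pos n with h0 | hpos
  · subst h0
    exact ⟨1, by rw [pow_one]; ext i j; exact i.elim0⟩
  by_cases hp : ∃ k, n = 2^k
  · obtain ⟨k, rfl⟩ := hp
    exact ⟨1, by rw [pow_one, (PascalCubeAux.dyadic k).1, sub_self]⟩
  · push_neg at hp
    set k := Nat.log 2 n with hk
    have hk1 : 2^k ≤ n := Nat.pow_log_le_self 2 (by omega)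
    have hk2 : n < 2^(k+1) := Nat.lt_pow_succ_log_self (by norm_num) n
    have hlt : 2^k < n := lt_of_le_of_ne hk1 (fun h => hp k h.symm)
    have h2 : (2:ℕ)^(k+1) = 2^k + 2^k := by rw [pow_succ]; omega
    exact PascalCubeAux.step k n (2^(k+1) - n) hlt (by omega) (IH _ (by omega))
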